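/- arXiv:2510.21267 — 2 statements merged into one kernel-verified Lean document; each statement's English description precedes it below -/
import Mathlib

section
/- Let n ≥ 1 and let ε > 0. Suppose α = (α_1, …, α_n) is a probability distribution on n outcomes (each α_j ≥ 0 and ∑_j α_j = 1) with every entry satisfying α_j ≥ ε. Then the Shannon entropy H(α) = -∑_{j=1}^n α_j log α_j satisfies H(α) ≥ -(1-(n-1)ε) · log(1-(n-1)ε) - (n-1) · ε · log ε. -/
open Real

private lemma mono_phi (ε a : ℝ) (hε : 0 < ε) (ha : 0 ≤ a) :
    MonotoneOn (fun t : ℝ => (t + a) * Real.log (t + a) - t * Real.log t) (Set.Ici ε) := by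
  have hcont : ContinuousOn (fun t : ℝ => (t + a) * Real.log (t + a) - t * Real.log t)
      (Set.Ici ε) := by
    apply ContinuousOn.sub
    · exact (Real.continuous_mul_log.comp (continuous_id.add continuous_const)).continuousOn
    · exact Real.continuous_mul_log.continuousOn
  apply monotoneOn_of_deriv_nonneg (convex_Ici ε) hcont
  · intro t ht
    rw [interior_Ici] at ht
    have ht' : ε < t := ht
    have h1 : t + a ≠ 0 := by nlinarith
    have h2 : t ≠ 0 := by nlinarith
    have hd1 : HasDerivAt (fun t : ℝ => (t + a) * Real.log (t + a))
        (Real.log (t + a) + 1) t := by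
      have := (Real.hasDerivAt_mul_log h1).comp t ((hasDerivAt_id t).add_const a)
      simpa [Function.comp_def] using this
    exact ((hd1.sub (Real.hasDerivAt_mul_log h2)).differentiableAt).differentiableWithinAt
  · intro t ht
    rw [interior_Ici] at ht
    have ht' : ε < t := ht
    have h1 : t + a ≠ 0 := by nlinarith
    have h2 : t ≠ 0 := by nlinarith
    have hd1 : HasDerivAt (fun t : ℝ => (t + a) * Real.log (t + a))
        (Real.log (t + a) + 1) t := by
      have := (Real.hasDerivAt_mul_log h1).comp t ((hasDerivAt_id t).add_const a)
      simpa [Function.comp_def] using this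
    have hd : HasDerivAt (fun t : ℝ => (t + a) * Real.log (t + a) - t * Real.log t)
        ((Real.log (t + a) + 1) - (Real.log t + 1)) t :=
      hd1.sub (Real.hasDerivAt_mul_log h2)
    rw [hd.deriv]
    have : Real.log t ≤ Real.log (t + a) :=
      Real.log_le_log (lt_trans hε ht') (by linarith)
    linarith

private lemma key_lemma (ε a b : ℝ) (hε : 0 < ε) (ha : 0 ≤ a) (hb : 0 ≤ b) :
    -(ε * Real.log ε) + -((ε + a + b) * Real.log (ε + a + b))
      ≤ -((ε + a) * Real.log (ε + a)) + -((ε + b) * Real.log (ε + b)) := by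
  have h := mono_phi ε a hε ha (Set.self_mem_Ici)
    (show ε + b ∈ Set.Ici ε by simp [Set.mem_Ici]; linarith) (by linarith)
  simp only at h
  have : ε + b + a = ε + a + b := by ring
  rw [this] at h
  linarith

private lemma sum_lemma {ι : Type*} (ε : ℝ) (hε : 0 < ε) (β : ι → ℝ) (hβ : ∀ j, 0 ≤ β j)
    (s : Finset ι) (hs : s.Nonempty) :
    ((s.card : ℝ) - 1) * (-(ε * Real.log ε))
      + -((ε + ∑ j ∈ s, β j) * Real.log (ε + ∑ j ∈ s, β j))
      ≤ ∑ j ∈ s, -((ε + β j) * Real.log (ε + β j)) := by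
  induction hs using Finset.Nonempty.cons_induction with
  | singleton a => simp
  | cons a s ha hs ih =>
    rw [Finset.sum_cons, Finset.sum_cons, Finset.card_cons]
    have hS : 0 ≤ ∑ j ∈ s, β j := Finset.sum_nonneg fun j _ => hβ j
    have hk := key_lemma ε (β a) (∑ j ∈ s, β j) hε (hβ a) hS
    have : ε + β a + ∑ j ∈ s, β j = ε + (β a + ∑ j ∈ s, β j) := by ring
    rw [this] at hk
    push_cast
    linarith

open Real in
/-- Lower bound of Shannon entropy for a probability distribution on `n` outcomes
all of whose entries are at least `ε`. -/
theorem entropy_lower_bound (n : ℕ) (hn : 1 ≤ n) (ε : ℝ) (hε : 0 < ε)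
    (α : Fin n → ℝ) (hα : ∀ j, ε ≤ α j) (hsum : ∑ j, α j = 1) :
    -(1 - ((n : ℝ) - 1) * ε) * Real.log (1 - ((n : ℝ) - 1) * ε)
        - ((n : ℝ) - 1) * ε * Real.log ε
      ≤ -∑ j, α j * Real.log (α j) := by
  have hne : (Finset.univ : Finset (Fin n)).Nonempty := by
    simpa [Finset.univ_nonempty_iff] using Fin.pos_iff_nonempty.mp (by omega)
  have h := sum_lemma ε hε (fun j => α j - ε) (fun j => sub_nonneg.mpr (hα j)) Finset.univ hne
  have hcard : ((Finset.univ : Finset (Fin n)).card : ℝ) = (n : ℝ) := by simp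
  have hsum' : ∑ j, (α j - ε) = 1 - n * ε := by
    rw [Finset.sum_sub_distrib, hsum]
    simp [mul_comm]
  rw [hcard, hsum'] at h
  have e1 : ε + (1 - n * ε) = 1 - ((n : ℝ) - 1) * ε := by ring
  rw [e1] at h
  have e2 : ∀ j, ε + (α j - ε) = α j := fun j => by ring
  simp only [e2] at h
  rw [Finset.sum_neg_distrib] at h
  linarith
end

section
/- Let ε > 0 and define F : ℝ → ℝ by F(x) = -(1-(x-1)ε) · log(1-(x-1)ε) - (x-1) · ε · log ε. Then F is strictly monotonically increasing on the set of x > 0 with ε ≤ 1/x (equivalently, 1 - (x-1)ε ≥ ε). In particular, for natural numbers n₁ < n₂ with ε ≤ 1/n₂, the entropy lower bound F(n₁) is strictly less than F(n₂). -/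
noncomputable def entropyBound (ε x : ℝ) : ℝ :=
  -(1 - (x - 1) * ε) * Real.log (1 - (x - 1) * ε) - (x - 1) * ε * Real.log ε

lemma entropyBound_eq (ε : ℝ) : entropyBound ε =
    fun x => -((1 - (x - 1) * ε) * Real.log (1 - (x - 1) * ε)) - (x - 1) * ε * Real.log ε := by
  funext x; simp [entropyBound]; ring

lemma entropyBound_cont (ε : ℝ) : Continuous (entropyBound ε) := by
  rw [entropyBound_eq]
  exact ((Real.continuous_mul_log.comp (by continuity)).neg).sub (by continuity)

lemma entropyBound_hasDeriv (ε : ℝ) (hε : 0 < ε) {x : ℝ} (hx : x < ε⁻¹) :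
    HasDerivAt (entropyBound ε)
      (ε * (Real.log (1 - (x - 1) * ε) + 1) - ε * Real.log ε) x := by
  have hu : ε < 1 - (x - 1) * ε := by
    have : x * ε < 1 := by
      calc x * ε < ε⁻¹ * ε := by exact mul_lt_mul_of_pos_right hx hε
      _ = 1 := inv_mul_cancel₀ hε.ne'
    nlinarith
  have hu0 : (1 - (x - 1) * ε) ≠ 0 := by nlinarith
  have h1 : HasDerivAt (fun y : ℝ => 1 - (y - 1) * ε) (-ε) x := by
    have := (((hasDerivAt_id x).sub_const 1).mul_const ε).const_sub 1
    simpa using this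
  have h2 := (Real.hasDerivAt_mul_log hu0).comp x h1
  have h3 : HasDerivAt (fun y : ℝ => (y - 1) * ε * Real.log ε) (ε * Real.log ε) x := by
    have := (((hasDerivAt_id x).sub_const 1).mul_const ε).mul_const (Real.log ε)
    simpa using this
  have h4 := (h2.neg).sub h3
  rw [entropyBound_eq]
  convert h4 using 1
  · rfl
  · rfl
  · rfl
  ring

/-- The minimum-entropy lower bound `F(x) = -(1-(x-1)ε)·log(1-(x-1)ε) - (x-1)·ε·log ε`
is strictly increasing on `{x | 0 < x ∧ ε ≤ 1/x}`; in particular for natural numbers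
`n₁ < n₂` with `ε ≤ 1/n₂` we have `F(n₁) < F(n₂)`. -/
theorem entropyBound_strictMonoOn (ε : ℝ) (hε : 0 < ε) :
    StrictMonoOn (entropyBound ε) {x : ℝ | 0 < x ∧ ε ≤ 1 / x} ∧
      ∀ n₁ n₂ : ℕ, n₁ < n₂ → ε ≤ 1 / (n₂ : ℝ) →
        entropyBound ε (n₁ : ℝ) < entropyBound ε (n₂ : ℝ) := by
  have hset : {x : ℝ | 0 < x ∧ ε ≤ 1 / x} = Set.Ioc 0 ε⁻¹ := by
    ext x
    simp only [Set.mem_setOf_eq, Set.mem_Ioc]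
    constructor
    · rintro ⟨hx, h⟩
      refine ⟨hx, ?_⟩
      rw [le_div_iff₀ hx] at h
      rw [← one_div, le_div_iff₀ hε]
      linarith [h]
    · rintro ⟨hx, h⟩
      refine ⟨hx, ?_⟩
      rw [le_div_iff₀ hx]
      calc ε * x ≤ ε * ε⁻¹ := by exact mul_le_mul_of_nonneg_left h hε.le
      _ = 1 := mul_inv_cancel₀ hε.ne'
  have hmono : StrictMonoOn (entropyBound ε) (Set.Ioc 0 ε⁻¹) := by
    apply strictMonoOn_of_deriv_pos (convex_Ioc _ _) (entropyBound_cont ε).continuousOn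
    intro x hx
    rw [interior_Ioc] at hx
    have hd := entropyBound_hasDeriv ε hε hx.2
    rw [hd.deriv]
    have hu : ε < 1 - (x - 1) * ε := by
      have : x * ε < 1 := by
        calc x * ε < ε⁻¹ * ε := mul_lt_mul_of_pos_right hx.2 hε
        _ = 1 := inv_mul_cancel₀ hε.ne'
      nlinarith
    have hlog : Real.log ε < Real.log (1 - (x - 1) * ε) := Real.log_lt_log hε hu
    nlinarith
  rw [hset]
  refine ⟨hmono, ?_⟩
  intro n₁ n₂ hlt hεn
  have hn2 : 0 < n₂ := Nat.lt_of_le_of_lt (Nat.zero_le _) hlt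
  have hn2r : (0 : ℝ) < n₂ := by exact_mod_cast hn2
  have hεn' : ε * n₂ ≤ 1 := by rw [le_div_iff₀ hn2r] at hεn; linarith
  have hn2mem : (n₂ : ℝ) ∈ Set.Ioc 0 ε⁻¹ := by
    refine ⟨hn2r, ?_⟩
    rw [← one_div, le_div_iff₀ hε]
    linarith
  have hε1 : ε ≤ 1 := by
    have : (1 : ℝ) ≤ n₂ := by exact_mod_cast hn2
    nlinarith
  rcases Nat.eq_zero_or_pos n₁ with h0 | hpos
  · subst h0
    have hF0 : entropyBound ε 0 < 0 := by
      have h1 : 0 < Real.log (1 + ε) := Real.log_pos (by linarith)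
      have h2 : Real.log ε ≤ 0 := Real.log_nonpos hε.le hε1
      simp only [entropyBound]
      have ha : 1 - ((0:ℝ) - 1) * ε = 1 + ε := by ring
      rw [ha]
      nlinarith [mul_pos (show (0:ℝ) < 1 + ε by linarith) h1,
        mul_nonpos_of_nonneg_of_nonpos hε.le h2]
    have hF1 : entropyBound ε 1 = 0 := by simp [entropyBound]
    rcases eq_or_lt_of_le (Nat.one_le_iff_ne_zero.mpr hn2.ne' : 1 ≤ n₂) with h1 | h1
    · rw [Nat.cast_zero, ← h1, Nat.cast_one, hF1]; exact hF0
    · have h1mem : (1 : ℝ) ∈ Set.Ioc 0 ε⁻¹ := by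
        refine ⟨one_pos, ?_⟩
        rw [← one_div, le_div_iff₀ hε]; linarith
      have := hmono h1mem hn2mem (by exact_mod_cast h1)
      rw [hF1] at this
      rw [Nat.cast_zero]
      linarith
  · have hn1mem : (n₁ : ℝ) ∈ Set.Ioc 0 ε⁻¹ := by
      refine ⟨by exact_mod_cast hpos, le_trans ?_ hn2mem.2⟩
      exact_mod_cast Nat.le_of_lt hlt
    exact hmono hn1mem hn2mem (by exact_mod_cast hlt)
end
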